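/- Let G1 and G2 be finite graphs on the same number n of vertices. Form G_i' from G_i by adding a universal vertex u_i, a pendant leaf v_i attached to u_i, and then subdividing every edge once; let G' = G1' ⊔ G2' (disjoint union). If G' admits an involutive automorphism f with e ∩ f(e) = ∅ for every edge e, then G1 and G2 are isomorphic. -/
import Mathlib


open SimpleGraph Finset

/-- `G` together with a new universal vertex `u = Sum.inr false` and a pendant leaf
`v = Sum.inr true` attached to `u`. -/
def augment {V : Type*} (G : SimpleGraph V) : SimpleGraph (V ⊕ Bool) :=
  SimpleGraph.fromRel fun a b =>
    match a, b with
    | Sum.inl x, Sum.inl y => G.Adj x y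
    | Sum.inl _, Sum.inr b => b = false
    | Sum.inr _, Sum.inr _ => True
    | _, _ => False

/-- The subdivision of `H`: every edge is replaced by a path of length 2 through a new
vertex indexed by that edge. -/
def subdiv {W : Type*} (H : SimpleGraph W) : SimpleGraph (W ⊕ H.edgeSet) :=
  SimpleGraph.fromRel fun a b =>
    match a, b with
    | Sum.inl w, Sum.inr e => w ∈ (e : Sym2 W)
    | _, _ => False

namespace Stmt16Aux

open Sum

variable {V W W' : Type*}

@[simp] lemma augment_adj_inl_inl (G : SimpleGraph V) (x y : V) :
    (augment G).Adj (inl x) (inl y) ↔ G.Adj x y := by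
  simp only [augment, fromRel_adj, ne_eq, inl.injEq]
  constructor
  · rintro ⟨h, h1 | h1⟩
    · exact h1
    · exact h1.symm
  · exact fun h => ⟨h.ne, Or.inl h⟩

@[simp] lemma augment_adj_inl_inr (G : SimpleGraph V) (x : V) (b : Bool) :
    (augment G).Adj (inl x) (inr b) ↔ b = false := by
  simp [augment, fromRel_adj]

@[simp] lemma augment_adj_inr_inl (G : SimpleGraph V) (x : V) (b : Bool) :
    (augment G).Adj (inr b) (inl x) ↔ b = false := by
  rw [adj_comm]; simp

@[simp] lemma augment_adj_inr_inr (G : SimpleGraph V) (b c : Bool) :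
    (augment G).Adj (inr b) (inr c) ↔ b ≠ c := by
  simp [augment, fromRel_adj]

@[simp] lemma subdiv_adj_inl_inr (H : SimpleGraph W) (w : W) (e : H.edgeSet) :
    (subdiv H).Adj (inl w) (inr e) ↔ w ∈ (e : Sym2 W) := by
  simp [subdiv, fromRel_adj]

@[simp] lemma subdiv_adj_inr_inl (H : SimpleGraph W) (w : W) (e : H.edgeSet) :
    (subdiv H).Adj (inr e) (inl w) ↔ w ∈ (e : Sym2 W) := by
  rw [adj_comm]; simp

@[simp] lemma subdiv_adj_inl_inl (H : SimpleGraph W) (w w' : W) :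
    ¬ (subdiv H).Adj (inl w) (inl w') := by
  simp [subdiv, fromRel_adj]

@[simp] lemma subdiv_adj_inr_inr (H : SimpleGraph W) (e e' : H.edgeSet) :
    ¬ (subdiv H).Adj (inr e) (inr e') := by
  simp [subdiv, fromRel_adj]


/-- common neighbour characterisation of adjacency through subdivision -/
lemma adj_iff_common (H : SimpleGraph W) (x y : W) :
    H.Adj x y ↔ x ≠ y ∧ ∃ z, (subdiv H).Adj (inl x) z ∧ (subdiv H).Adj (inl y) z := by
  constructor
  · intro h
    refine ⟨h.ne, inr ⟨s(x,y), h⟩, ?_, ?_⟩ <;> simp [Sym2.mem_iff]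
  · rintro ⟨hne, z, hz1, hz2⟩
    match z with
    | inl w => exact absurd hz1 (subdiv_adj_inl_inl H x w)
    | inr e =>
      rw [subdiv_adj_inl_inr] at hz1 hz2
      have : (e : Sym2 W) = s(x, y) := (Sym2.mem_and_mem_iff hne).mp ⟨hz1, hz2⟩
      have he := e.2
      rw [this, SimpleGraph.mem_edgeSet] at he
      exact he

/-- connectivity of subdiv (augment G) from the universal vertex -/
lemma reachable_subdiv_augment (G : SimpleGraph V) (a : (V ⊕ Bool) ⊕ (augment G).edgeSet) :
    (subdiv (augment G)).Reachable (inl (inr false)) a := by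
  have key : ∀ w : V ⊕ Bool, (subdiv (augment G)).Reachable (inl (inr false)) (inl w) := by
    intro w
    match w with
    | inr false => exact Reachable.refl _
    | inr true =>
      have h : (augment G).Adj (inr false) (inr true) := by simp
      have h1 : (subdiv (augment G)).Adj (inl (inr false)) (inr ⟨s(inr false, inr true), h⟩) := by
        simp [Sym2.mem_iff]
      have h2 : (subdiv (augment G)).Adj (inr (⟨s(inr false, inr true), h⟩ : (augment G).edgeSet)) (inl (inr true)) := by
        rw [adj_comm, subdiv_adj_inl_inr]; simp [Sym2.mem_iff]
      exact h1.reachable.trans h2.reachable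
    | inl x =>
      have h : (augment G).Adj (inr false) (inl x) := by simp
      have h1 : (subdiv (augment G)).Adj (inl (inr false)) (inr ⟨s(inr false, inl x), h⟩) := by
        simp [Sym2.mem_iff]
      have h2 : (subdiv (augment G)).Adj (inr (⟨s(inr false, inl x), h⟩ : (augment G).edgeSet)) (inl (inl x)) := by
        rw [adj_comm, subdiv_adj_inl_inr]; simp [Sym2.mem_iff]
      exact h1.reachable.trans h2.reachable
  match a with
  | inl w => exact key w
  | inr e =>
    obtain ⟨e, he⟩ := e
    induction e using Sym2.ind with
    | _ x y =>
      have h2 : (subdiv (augment G)).Adj (inl x) (inr ⟨s(x, y), he⟩) := by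
        simp [Sym2.mem_iff]
      exact (key x).trans h2.reachable



lemma neighborSet_subdiv_inl (H : SimpleGraph W) (w : W) :
    (subdiv H).neighborSet (inl w) = inr '' {e : H.edgeSet | w ∈ (e : Sym2 W)} := by
  ext z
  cases z <;> simp [mem_neighborSet, subdiv, fromRel_adj]

lemma ncard_setOf_mem (H : SimpleGraph W) (w : W) :
    {e : H.edgeSet | w ∈ (e : Sym2 W)}.ncard = (H.neighborSet w).ncard := by
  have h1 : (Subtype.val '' {e : H.edgeSet | w ∈ (e : Sym2 W)}) = H.incidenceSet w := by
    ext e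
    simp only [Set.mem_image, Set.mem_setOf_eq, Subtype.exists, SimpleGraph.incidenceSet,
      Set.mem_setOf_eq, exists_and_left]
    constructor
    · rintro ⟨a, hw, ha, rfl⟩; exact ⟨ha, hw⟩
    · rintro ⟨ha, hw⟩; exact ⟨e, hw, ha, rfl⟩
  calc {e : H.edgeSet | w ∈ (e : Sym2 W)}.ncard
      = (Subtype.val '' {e : H.edgeSet | w ∈ (e : Sym2 W)}).ncard :=
        (Set.ncard_image_of_injective _ Subtype.val_injective).symm
    _ = (H.incidenceSet w).ncard := by rw [h1]
    _ = (H.neighborSet w).ncard := by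
        letI := Classical.decEq W
        rw [← Nat.card_coe_set_eq, ← Nat.card_coe_set_eq]
        exact Nat.card_congr (H.incidenceSetEquivNeighborSet w)

lemma ncard_subdiv_inr (H : SimpleGraph W) (e : H.edgeSet) :
    ((subdiv H).neighborSet (inr e)).ncard = 2 := by
  obtain ⟨e, he⟩ := e
  induction e using Sym2.ind with
  | _ x y =>
    have hxy : x ≠ y := (H.mem_edgeSet.mp he).ne
    have h : (subdiv H).neighborSet (inr ⟨s(x,y), he⟩) = {inl x, inl y} := by
      ext z
      cases z <;> simp [mem_neighborSet, subdiv, fromRel_adj, Sym2.mem_iff]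
    rw [h]
    exact Set.ncard_pair (by simpa using hxy)

lemma ncard_aug_u (G : SimpleGraph V) [Fintype V] :
    ((augment G).neighborSet (inr false)).ncard = Fintype.card V + 1 := by
  have h : (augment G).neighborSet (inr false)
      = insert (inr true) (Set.range (inl : V → V ⊕ Bool)) := by
    ext z
    cases z <;> simp [mem_neighborSet, augment, fromRel_adj, eq_comm]
  have h2 : (Set.range (inl : V → V ⊕ Bool)).ncard = Fintype.card V := by
    rw [← Set.image_univ, Set.ncard_image_of_injective _ inl_injective, Set.ncard_univ,
      Nat.card_eq_fintype_card]
  rw [h, Set.ncard_insert_of_notMem (by simp), h2]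

lemma ncard_aug_v (G : SimpleGraph V) [Fintype V] :
    ((augment G).neighborSet (inr true)).ncard = 1 := by
  have h : (augment G).neighborSet (inr true) = {inr false} := by
    ext z
    cases z <;> simp [mem_neighborSet, augment, fromRel_adj, eq_comm]
  rw [h, Set.ncard_singleton]

lemma ncard_aug_inl_le (G : SimpleGraph V) [Fintype V] (x : V) :
    ((augment G).neighborSet (inl x)).ncard ≤ Fintype.card V := by
  have hdisj : Disjoint ((augment G).neighborSet (inl x)) {inl x, inr true} := by
    rw [Set.disjoint_right]
    rintro a (rfl | rfl) h
    · exact (augment G).irrefl h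
    · simp [mem_neighborSet, augment, fromRel_adj] at h
  have := Set.ncard_union_eq hdisj (Set.toFinite _) (Set.toFinite _)
  have hle : (((augment G).neighborSet (inl x)) ∪ {inl x, inr true}).ncard
      ≤ (Set.univ : Set (V ⊕ Bool)).ncard := Set.ncard_le_ncard (Set.subset_univ _) (Set.toFinite _)
  rw [this, Set.ncard_univ, Nat.card_eq_fintype_card, Fintype.card_sum, Fintype.card_bool,
    Set.ncard_pair (by simp)] at hle
  omega

variable {V₁ V₂ α β : Type*}

/-- reachability induction -/
lemma reach_ind {G : SimpleGraph α} (P : α → Prop)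
    (step : ∀ x y, G.Adj x y → P x → P y) {x y : α} (h : G.Reachable x y) (hx : P x) : P y := by
  obtain ⟨p⟩ := h
  induction p with
  | nil => exact hx
  | cons hadj p ih => exact ih (step _ _ hadj hx)

lemma subdiv_adj_isLeft {H : SimpleGraph W} {a b : W ⊕ H.edgeSet}
    (h : (subdiv H).Adj a b) : a.isLeft = !b.isLeft := by
  match a, b with
  | inl _, inl _ => exact absurd h (by simp)
  | inr _, inr _ => exact absurd h (by simp)
  | inl _, inr _ => rfl
  | inr _, inl _ => rfl

lemma subdiv_iso_isLeft {H₁ : SimpleGraph W} {H₂ : SimpleGraph W'}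
    (φ : subdiv H₁ ≃g subdiv H₂) {w₀ : W} {w₀' : W'} (h₀ : φ (inl w₀) = inl w₀')
    (hconn : ∀ a, (subdiv H₁).Reachable (inl w₀) a) :
    ∀ a, (φ a).isLeft = a.isLeft := by
  intro a
  refine reach_ind (fun a => (φ a).isLeft = a.isLeft) ?_ (hconn a) (by simp [h₀])
  intro x y hxy hx
  have h1 : (subdiv H₂).Adj (φ x) (φ y) := φ.map_rel_iff.mpr hxy
  rw [subdiv_adj_isLeft h1.symm, subdiv_adj_isLeft hxy.symm, hx]

/-- reconstruct an isomorphism of graphs from one of their subdivisions mapping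
left vertices to left vertices -/
lemma subdiv_iso_down {H₁ : SimpleGraph W} {H₂ : SimpleGraph W'}
    (φ : subdiv H₁ ≃g subdiv H₂)
    (hL : ∀ w, ∃ w', φ (inl w) = inl w')
    (hR : ∀ w', ∃ w, φ (inl w) = inl w') :
    ∃ ψ : H₁ ≃g H₂, ∀ w, φ (inl w) = inl (ψ w) := by
  choose g hg using hL
  choose g' hg' using hR
  have hgl : ∀ w', g (g' w') = w' := by
    intro w'
    have h1 := hg (g' w')
    rw [hg' w'] at h1
    exact inl_injective h1.symm
  have hgr : ∀ w, g' (g w) = w := by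
    intro w
    have h1 : φ (inl (g' (g w))) = φ (inl w) := (hg' (g w)).trans (hg w).symm
    exact inl_injective (φ.injective h1)
  have key : ∀ (x : W) (z), (subdiv H₁).Adj (inl x) z ↔ (subdiv H₂).Adj (inl (g x)) (φ z) := by
    intro x z
    rw [← hg x, φ.map_rel_iff]
  refine ⟨⟨⟨g, g', hgr, hgl⟩, ?_⟩, hg⟩
  intro a b
  simp only [Equiv.coe_fn_mk]
  rw [adj_iff_common H₂, adj_iff_common H₁]
  constructor
  · rintro ⟨hne, z, h1, h2⟩
    refine ⟨fun h => hne (by rw [h]), φ.symm z, ?_, ?_⟩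
    · rw [key, φ.apply_symm_apply]; exact h1
    · rw [key, φ.apply_symm_apply]; exact h2
  · rintro ⟨hne, z, h1, h2⟩
    rw [key] at h1 h2
    refine ⟨fun h => hne (by rw [← hgr a, h, hgr b]), φ z, h1, h2⟩

/-- swapping two vertices with identical neighbourhoods is an automorphism -/
lemma swap_adj [DecidableEq W] {G : SimpleGraph W} {p q : W} (h : ∀ z, G.Adj p z ↔ G.Adj q z)
    {a b : W} (hab : G.Adj a b) : G.Adj (Equiv.swap p q a) (Equiv.swap p q b) := by
  have hpq : ∀ {c}, G.Adj p c → c ≠ q := fun hc hcq => G.irrefl ((h _).mp (hcq ▸ hc))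
  have hqp : ∀ {c}, G.Adj q c → c ≠ p := fun hc hcp => G.irrefl ((h _).mpr (hcp ▸ hc))
  rcases eq_or_ne a p with rfl | hap
  · rw [Equiv.swap_apply_left, Equiv.swap_apply_of_ne_of_ne hab.ne' (hpq hab)]
    exact (h b).mp hab
  rcases eq_or_ne a q with rfl | haq
  · rw [Equiv.swap_apply_right, Equiv.swap_apply_of_ne_of_ne (hqp hab) hab.ne']
    exact (h b).mpr hab
  rw [Equiv.swap_apply_of_ne_of_ne hap haq]
  rcases eq_or_ne b p with rfl | hbp
  · rw [Equiv.swap_apply_left]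
    exact ((h a).mp hab.symm).symm
  rcases eq_or_ne b q with rfl | hbq
  · rw [Equiv.swap_apply_right]
    exact ((h a).mpr hab.symm).symm
  rw [Equiv.swap_apply_of_ne_of_ne hbp hbq]
  exact hab

def swapIso [DecidableEq W] (G : SimpleGraph W) (p q : W) (h : ∀ z, G.Adj p z ↔ G.Adj q z) : G ≃g G where
  toEquiv := Equiv.swap p q
  map_rel_iff' := by
    intro a b
    constructor
    · intro had
      have := swap_adj h had
      simpa using this
    · exact swap_adj h

lemma augment_adj_inr_true (G : SimpleGraph V) (w : V ⊕ Bool) :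
    (augment G).Adj (inr true) w ↔ w = inr false := by
  cases w <;> simp

/-- from an isomorphism of augmentations fixing `u` and `v`, recover one of the graphs -/
lemma augment_iso_down' {G₁ : SimpleGraph V₁} {G₂ : SimpleGraph V₂}
    (ψ : augment G₁ ≃g augment G₂) (hu : ψ (inr false) = inr false)
    (hv : ψ (inr true) = inr true) : Nonempty (G₁ ≃g G₂) := by
  have hL : ∀ x, ∃ y, ψ (inl x) = inl y := by
    intro x
    match h : ψ (inl x) with
    | inl y => exact ⟨y, rfl⟩
    | inr false => exact absurd (ψ.injective (h.trans hu.symm)) (by simp)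
    | inr true => exact absurd (ψ.injective (h.trans hv.symm)) (by simp)
  have hR : ∀ y, ∃ x, ψ (inl x) = inl y := by
    intro y
    match h : ψ.symm (inl y) with
    | inl x => exact ⟨x, by rw [← h, RelIso.apply_symm_apply]⟩
    | inr false =>
      have : (inl y : V₂ ⊕ Bool) = inr false := by
        rw [← hu, ← h, RelIso.apply_symm_apply]
      exact absurd this (by simp)
    | inr true =>
      have : (inl y : V₂ ⊕ Bool) = inr true := by
        rw [← hv, ← h, RelIso.apply_symm_apply]
      exact absurd this (by simp)
  choose g hg using hL
  choose g' hg' using hR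
  have hgl : ∀ y, g (g' y) = y := by
    intro y
    have h1 := hg (g' y)
    rw [hg' y] at h1
    exact inl_injective h1.symm
  have hgr : ∀ x, g' (g x) = x := by
    intro x
    have h1 : ψ (inl (g' (g x))) = ψ (inl x) := (hg' (g x)).trans (hg x).symm
    exact inl_injective (ψ.injective h1)
  refine ⟨⟨⟨g, g', hgr, hgl⟩, ?_⟩⟩
  intro a b
  simp only [Equiv.coe_fn_mk]
  rw [← augment_adj_inl_inl G₂, ← hg a, ← hg b, ψ.map_rel_iff, augment_adj_inl_inl]

lemma augment_iso_down {G₁ : SimpleGraph V₁} {G₂ : SimpleGraph V₂}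
    (ψ : augment G₁ ≃g augment G₂) (hu : ψ (inr false) = inr false) :
    Nonempty (G₁ ≃g G₂) := by
  classical
  match hv : ψ (inr true) with
  | inr true => exact augment_iso_down' ψ hu hv
  | inr false => exact absurd (ψ.injective (hv.trans hu.symm)) (by simp)
  | inl x₀ =>
    have hx₀ : ∀ z, (augment G₂).Adj (inl x₀) z ↔ (augment G₂).Adj (inr true) z := by
      intro z
      calc (augment G₂).Adj (inl x₀) z
          ↔ (augment G₂).Adj (ψ (inr true)) (ψ (ψ.symm z)) := by
            rw [hv, RelIso.apply_symm_apply]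
        _ ↔ (augment G₁).Adj (inr true) (ψ.symm z) := ψ.map_rel_iff
        _ ↔ ψ.symm z = inr false := augment_adj_inr_true _ _
        _ ↔ z = inr false := by
            constructor
            · intro h
              have : z = ψ (inr false) := by rw [← h, RelIso.apply_symm_apply]
              rw [this, hu]
            · rintro rfl
              rw [← hu, RelIso.symm_apply_apply]
        _ ↔ (augment G₂).Adj (inr true) z := (augment_adj_inr_true _ _).symm
    refine augment_iso_down' (ψ.trans (swapIso (augment G₂) (inl x₀) (inr true) hx₀)) ?_ ?_
    · show Equiv.swap (inl x₀) (inr true) (ψ (inr false)) = inr false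
      rw [hu, Equiv.swap_apply_of_ne_of_ne (by simp) (by simp)]
    · show Equiv.swap (inl x₀) (inr true) (ψ (inr true)) = inr true
      rw [hv, Equiv.swap_apply_left]


lemma ncard_subdiv_inl (H : SimpleGraph W) (w : W) :
    ((subdiv H).neighborSet (inl w)).ncard = (H.neighborSet w).ncard := by
  rw [neighborSet_subdiv_inl, Set.ncard_image_of_injective _ inr_injective, ncard_setOf_mem]

lemma ncard_S_u (G : SimpleGraph V) [Fintype V] :
    ((subdiv (augment G)).neighborSet (inl (inr false))).ncard = Fintype.card V + 1 := by
  rw [ncard_subdiv_inl, ncard_aug_u]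

lemma ncard_S_le (G : SimpleGraph V) [Fintype V] (hn : 2 ≤ Fintype.card V)
    (w : (V ⊕ Bool) ⊕ (augment G).edgeSet) (hw : w ≠ inl (inr false)) :
    ((subdiv (augment G)).neighborSet w).ncard ≤ Fintype.card V := by
  match w with
  | inl (inl x) => rw [ncard_subdiv_inl]; exact ncard_aug_inl_le G x
  | inl (inr false) => exact absurd rfl hw
  | inl (inr true) => rw [ncard_subdiv_inl, ncard_aug_v]; omega
  | inr e => rw [ncard_subdiv_inr]; omega

lemma ncard_neighborSet_iso {G : SimpleGraph α} {H : SimpleGraph β} (φ : G ≃g H) (a : α) :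
    (H.neighborSet (φ a)).ncard = (G.neighborSet a).ncard := by
  have h : H.neighborSet (φ a) = φ '' G.neighborSet a := by
    ext z
    simp only [mem_neighborSet, Set.mem_image]
    constructor
    · intro hz
      refine ⟨φ.symm z, ?_, φ.apply_symm_apply z⟩
      rw [← φ.map_rel_iff, φ.apply_symm_apply]
      exact hz
    · rintro ⟨y, hy, rfl⟩
      exact φ.map_rel_iff.mpr hy
  rw [h, Set.ncard_image_of_injective _ φ.injective]

@[simp] lemma sum_adj_inl_inl {G : SimpleGraph α} {H : SimpleGraph β} (a b : α) :
    (G ⊕g H).Adj (inl a) (inl b) ↔ G.Adj a b := Iff.rfl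

@[simp] lemma sum_adj_inr_inr {G : SimpleGraph α} {H : SimpleGraph β} (a b : β) :
    (G ⊕g H).Adj (inr a) (inr b) ↔ H.Adj a b := Iff.rfl

@[simp] lemma sum_adj_inl_inr {G : SimpleGraph α} {H : SimpleGraph β} (a : α) (b : β) :
    ¬ (G ⊕g H).Adj (inl a) (inr b) := by
  intro h
  exact Bool.noConfusion h

@[simp] lemma sum_adj_inr_inl {G : SimpleGraph α} {H : SimpleGraph β} (a : β) (b : α) :
    ¬ (G ⊕g H).Adj (inr a) (inl b) := by
  intro h
  exact Bool.noConfusion h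

lemma ncard_sum_inl {G : SimpleGraph α} {H : SimpleGraph β} (a : α) :
    (((G ⊕g H)).neighborSet (inl a)).ncard = (G.neighborSet a).ncard := by
  have h : (G ⊕g H).neighborSet (inl a) = inl '' G.neighborSet a := by
    ext z
    cases z <;> simp [mem_neighborSet]
  rw [h, Set.ncard_image_of_injective _ inl_injective]

lemma ncard_sum_inr {G : SimpleGraph α} {H : SimpleGraph β} (a : β) :
    (((G ⊕g H)).neighborSet (inr a)).ncard = (H.neighborSet a).ncard := by
  have h : (G ⊕g H).neighborSet (inr a) = inr '' H.neighborSet a := by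
    ext z
    cases z <;> simp [mem_neighborSet]
  rw [h, Set.ncard_image_of_injective _ inr_injective]

end Stmt16Aux

open Stmt16Aux Sum in
/-- Let `G₁, G₂` have the same number of vertices, let `Gᵢ' = subdiv (augment Gᵢ)` and
`G' = G₁' ⊕g G₂'`. If `G'` admits an involutive automorphism mapping every edge to a
vertex-disjoint edge, then `G₁` and `G₂` are isomorphic. -/
theorem stmt_16 {V₁ V₂ : Type*} [Fintype V₁] [Fintype V₂]
    (G₁ : SimpleGraph V₁) (G₂ : SimpleGraph V₂)
    (hcard : Fintype.card V₁ = Fintype.card V₂)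
    (f : (subdiv (augment G₁) ⊕g subdiv (augment G₂)) ≃g
         (subdiv (augment G₁) ⊕g subdiv (augment G₂)))
    (hinv : ∀ x, f (f x) = x)
    (hdisj : ∀ a b, (subdiv (augment G₁) ⊕g subdiv (augment G₂)).Adj a b →
      f a ≠ a ∧ f a ≠ b ∧ f b ≠ a ∧ f b ≠ b) :
    Nonempty (G₁ ≃g G₂) := by
  classical
  by_cases hsmall : Fintype.card V₁ ≤ 1
  · have h1 : Subsingleton V₁ := Fintype.card_le_one_iff_subsingleton.mp hsmall
    have h2 : Subsingleton V₂ := Fintype.card_le_one_iff_subsingleton.mp (hcard ▸ hsmall)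
    refine ⟨⟨Fintype.equivOfCardEq hcard, ?_⟩⟩
    intro a b
    constructor
    · intro h
      exact absurd (Subsingleton.elim _ _) h.ne
    · intro h
      exact absurd (Subsingleton.elim _ _) h.ne
  push_neg at hsmall
  have hn2 : 2 ≤ Fintype.card V₁ := hsmall
  have hn2' : 2 ≤ Fintype.card V₂ := hcard ▸ hn2
  set n := Fintype.card V₁ with hn
  -- the universal vertices
  have hdeg : ∀ a, (((subdiv (augment G₁) ⊕g subdiv (augment G₂)).neighborSet (f a)).ncard)
      = ((subdiv (augment G₁) ⊕g subdiv (augment G₂)).neighborSet a).ncard :=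
    fun a => ncard_neighborSet_iso f a
  -- f maps u₁ to u₂
  have key1 : f (inl (inl (inr false))) = inr (inl (inr false)) := by
    have h1 : (((subdiv (augment G₁) ⊕g subdiv (augment G₂)).neighborSet
        (f (inl (inl (inr false))))).ncard) = n + 1 := by
      rw [hdeg, ncard_sum_inl, ncard_S_u]
    have hne : f (inl (inl (inr false))) ≠ inl (inl (inr false)) := by
      have he : (augment G₁).Adj (inr false) (inr true) := by simp
      have hadj : (subdiv (augment G₁) ⊕g subdiv (augment G₂)).Adj
          (inl (inl (inr false))) (inl (inr ⟨s(inr false, inr true), he⟩)) := by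
        rw [sum_adj_inl_inl]
        simp [Sym2.mem_iff]
      exact (hdisj _ _ hadj).1
    rcases hfu : f (inl (inl (inr false))) with w | w
    · -- stays in left component: impossible
      rw [hfu, ncard_sum_inl] at h1
      by_cases hw : w = inl (inr false)
      · rw [hw] at hfu
        exact absurd hfu hne
      · have := ncard_S_le G₁ hn2 w hw
        omega
    · rw [hfu, ncard_sum_inr] at h1
      by_cases hw : w = inl (inr false)
      · rw [hw]
      · have := ncard_S_le G₂ hn2' w hw
        rw [← hcard] at this
        omega
  have key2 : f (inr (inl (inr false))) = inl (inl (inr false)) := by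
    rw [← key1, hinv]
  -- f swaps the components
  have hAB : ∀ w, ∃ c, f (inl w) = inr c := by
    intro w
    refine reach_ind (fun w => ∃ c, f (inl w) = inr c) ?_
      (reachable_subdiv_augment G₁ w) ⟨_, key1⟩
    rintro x y hxy ⟨c, hc⟩
    have hadj : (subdiv (augment G₁) ⊕g subdiv (augment G₂)).Adj (f (inl x)) (f (inl y)) :=
      f.map_rel_iff.mpr hxy
    rw [hc] at hadj
    rcases h' : f (inl y) with d | d
    · rw [h'] at hadj
      exact absurd hadj (sum_adj_inr_inl c d)
    · exact ⟨d, rfl⟩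
  have hBA : ∀ w, ∃ c, f (inr w) = inl c := by
    intro w
    refine reach_ind (fun w => ∃ c, f (inr w) = inl c) ?_
      (reachable_subdiv_augment G₂ w) ⟨_, key2⟩
    rintro x y hxy ⟨c, hc⟩
    have hadj : (subdiv (augment G₁) ⊕g subdiv (augment G₂)).Adj (f (inr x)) (f (inr y)) :=
      f.map_rel_iff.mpr hxy
    rw [hc] at hadj
    rcases h' : f (inr y) with d | d
    · exact ⟨d, rfl⟩
    · rw [h'] at hadj
      exact absurd hadj (sum_adj_inl_inr c d)
  choose F hF using hAB
  choose F' hF' using hBA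
  have hFl : ∀ w, F' (F w) = w := by
    intro w
    have h1 : f (inr (F w)) = inl (F' (F w)) := hF' (F w)
    rw [← hF w, hinv] at h1
    exact inl_injective h1.symm
  have hFr : ∀ c, F (F' c) = c := by
    intro c
    have h1 : f (inl (F' c)) = inr (F (F' c)) := hF (F' c)
    rw [← hF' c, hinv] at h1
    exact inr_injective h1.symm
  have hmap : ∀ a b, (subdiv (augment G₂)).Adj (F a) (F b) ↔ (subdiv (augment G₁)).Adj a b := by
    intro a b
    rw [← sum_adj_inr_inr (G := subdiv (augment G₁)), ← hF a, ← hF b, f.map_rel_iff,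
      sum_adj_inl_inl]
  let φ : subdiv (augment G₁) ≃g subdiv (augment G₂) := ⟨⟨F, F', hFl, hFr⟩, hmap _ _⟩
  have φu : φ (inl (inr false)) = inl (inr false) := by
    have h1 : f (inl (inl (inr false))) = inr (F (inl (inr false))) := hF _
    rw [key1] at h1
    exact (inr_injective h1).symm
  have hL : ∀ w, ∃ w', φ (inl w) = inl w' := by
    intro w
    have := subdiv_iso_isLeft φ φu (reachable_subdiv_augment G₁) (inl w)
    rw [isLeft_inl] at this
    obtain ⟨y, hy⟩ := isLeft_iff.mp this
    exact ⟨y, hy⟩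
  have hR : ∀ w', ∃ w, φ (inl w) = inl w' := by
    have φu' : φ.symm (inl (inr false)) = inl (inr false) := by
      rw [← φu, RelIso.symm_apply_apply]
    intro w'
    have := subdiv_iso_isLeft φ.symm φu' (reachable_subdiv_augment G₂) (inl w')
    rw [isLeft_inl] at this
    obtain ⟨y, hy⟩ := isLeft_iff.mp this
    refine ⟨y, ?_⟩
    rw [← hy, RelIso.apply_symm_apply]
  obtain ⟨ψ, hψ⟩ := subdiv_iso_down φ hL hR
  have hu : ψ (inr false) = inr false := by
    have h1 := hψ (inr false)
    rw [φu] at h1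
    exact (inl_injective h1).symm
  exact augment_iso_down ψ hu
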